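/- For every integer k ≥ 0 and every real t > 2/(2k+1)², the series Σ_{i=k+1}^{∞} (2i+1)·e^{−i(i+1)t} converges and satisfies Σ_{i=k+1}^{∞} (2i+1)·e^{−i(i+1)t} ≤ (1/t)·e^{−k(k+1)t}. -/

import Mathlib

/-- tail bound for the trace of the heat kernel on `S²`:
for `t > 2/(2k+1)²`, `Σ_{i=k+1}^∞ (2i+1)e^{−i(i+1)t} ≤ (1/t)e^{−k(k+1)t}`. -/
theorem stmt_13 (k : ℕ) (t : ℝ) (ht : t > 2 / (2 * (k : ℝ) + 1) ^ 2) :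
    Summable (fun i : ℕ =>
      (2 * ((k + 1 + i : ℕ) : ℝ) + 1) *
        Real.exp (-(((k + 1 + i : ℕ) : ℝ) * (((k + 1 + i : ℕ) : ℝ) + 1)) * t)) ∧
    (∑' i : ℕ,
      (2 * ((k + 1 + i : ℕ) : ℝ) + 1) *
        Real.exp (-(((k + 1 + i : ℕ) : ℝ) * (((k + 1 + i : ℕ) : ℝ) + 1)) * t)) ≤
      (1 / t) * Real.exp (-((k : ℝ) * ((k : ℝ) + 1)) * t) := by
  have ht0 : 0 < t := lt_of_le_of_lt (by positivity) ht
  set f : ℝ → ℝ := fun x => (2*x+1) * Real.exp (-(x*(x+1))*t) with hf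
  set F : ℝ → ℝ := fun x => -(1/t) * Real.exp (-(x*(x+1))*t) with hFdef
  have hg : ∀ x : ℝ, HasDerivAt (fun x : ℝ => -(x*(x+1))*t) (-(2*x+1)*t) x := by
    intro x
    have h0 : HasDerivAt (fun x : ℝ => x*(x+1)) (2*x+1) x := by
      have h := (hasDerivAt_id x).mul ((hasDerivAt_id x).add_const 1)
      exact h.congr_deriv (by change (1:ℝ) * (x + 1) + x * 1 = 2*x+1; ring)
    have h2 := (h0.neg).mul_const t
    exact h2
  have hderivF : ∀ x, HasDerivAt F (f x) x := by
    intro x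
    have h2 := (Real.hasDerivAt_exp (-(x*(x+1))*t)).comp x (hg x)
    have h3 := h2.const_mul (-(1/t))
    exact h3.congr_deriv (by
      simp only [hf]
      rw [show -(1/t) * (Real.exp (-(x*(x+1))*t) * (-(2*x+1)*t)) = (t⁻¹ * t) * ((2*x+1) * Real.exp (-(x*(x+1))*t)) by ring, inv_mul_cancel₀ ht0.ne', one_mul])
  have hderivf : ∀ x, HasDerivAt f (Real.exp (-(x*(x+1))*t) * (2 - (2*x+1)^2 * t)) x := by
    intro x
    have he := (Real.hasDerivAt_exp (-(x*(x+1))*t)).comp x (hg x)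
    have h1 : HasDerivAt (fun x : ℝ => 2*x+1) 2 x := by
      simpa using ((hasDerivAt_id x).const_mul 2).add_const 1
    have h2 := h1.mul he
    exact h2.congr_deriv (by
      show 2 * Real.exp (-(x*(x+1))*t) + (2*x+1) * (Real.exp (-(x*(x+1))*t) * (-(2*x+1)*t)) = _
      ring)
  have hanti : AntitoneOn f (Set.Ici (k : ℝ)) := by
    apply antitoneOn_of_deriv_nonpos (convex_Ici _)
    · exact fun x _ => (hderivf x).continuousAt.continuousWithinAt
    · exact fun x _ => (hderivf x).differentiableAt.differentiableWithinAt
    · intro x hx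
      rw [interior_Ici] at hx
      rw [(hderivf x).deriv]
      have hxk : (k : ℝ) < x := hx
      have h1 : (2*(k:ℝ)+1)^2 ≤ (2*x+1)^2 := by nlinarith [Nat.cast_nonneg (α := ℝ) k]
      have h2 : (2:ℝ) < (2*x+1)^2 * t := by
        have hpos : (0:ℝ) < (2*(k:ℝ)+1)^2 := by positivity
        have ht' := (div_lt_iff₀ hpos).mp ht
        nlinarith
      have : (0:ℝ) < Real.exp (-(x*(x+1))*t) := Real.exp_pos _
      nlinarith
  have hstep : ∀ a : ℝ, (k:ℝ) ≤ a → f (a+1) ≤ F (a+1) - F a := by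
    intro a ha
    obtain ⟨c, hc, hc2⟩ := exists_hasDerivAt_eq_slope F f (by linarith : a < a+1)
      (fun x _ => (hderivF x).continuousAt.continuousWithinAt)
      (fun x _ => hderivF x)
    have hfc : f c = F (a+1) - F a := by rw [hc2]; field_simp [slope_def_field]; ring
    rw [← hfc]
    exact hanti (Set.mem_Ici.mpr (by linarith [hc.1]))
      (Set.mem_Ici.mpr (by linarith)) (le_of_lt hc.2)
  have hFneg : ∀ x : ℝ, F x ≤ 0 := by
    intro x
    have h := mul_pos (show (0:ℝ) < 1/t by positivity) (Real.exp_pos (-(x*(x+1))*t))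
    simp only [hFdef]
    linarith
  have hpartial : ∀ N : ℕ, ∑ i ∈ Finset.range N, f ((k:ℝ)+1+i) ≤ F ((k:ℝ)+N) - F k := by
    intro N
    induction N with
    | zero => simp
    | succ n ih =>
      rw [Finset.sum_range_succ]
      have := hstep ((k:ℝ)+n) (le_add_of_nonneg_right (Nat.cast_nonneg n))
      have heq : (k:ℝ) + ↑(n+1) = ((k:ℝ)+n)+1 := by push_cast; ring
      rw [heq]
      have heq2 : (k:ℝ)+1+(n:ℝ) = ((k:ℝ)+n)+1 := by ring
      rw [heq2]
      linarith
  have hbound : ∀ N : ℕ, ∑ i ∈ Finset.range N,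
      (2 * ((k + 1 + i : ℕ) : ℝ) + 1) *
        Real.exp (-(((k + 1 + i : ℕ) : ℝ) * (((k + 1 + i : ℕ) : ℝ) + 1)) * t) ≤
      (1 / t) * Real.exp (-((k : ℝ) * ((k : ℝ) + 1)) * t) := by
    intro N
    have h1 : ∑ i ∈ Finset.range N,
        (2 * ((k + 1 + i : ℕ) : ℝ) + 1) *
          Real.exp (-(((k + 1 + i : ℕ) : ℝ) * (((k + 1 + i : ℕ) : ℝ) + 1)) * t)
        = ∑ i ∈ Finset.range N, f ((k:ℝ)+1+i) := by
      apply Finset.sum_congr rfl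
      intro i _
      simp only [hf]
      push_cast
      ring_nf
    rw [h1]
    have h2 := hpartial N
    have h3 := hFneg ((k:ℝ)+N)
    have h4 : -F (k:ℝ) = (1 / t) * Real.exp (-((k : ℝ) * ((k : ℝ) + 1)) * t) := by
      simp only [hFdef]; ring
    linarith
  have hsummable : Summable (fun i : ℕ =>
      (2 * ((k + 1 + i : ℕ) : ℝ) + 1) *
        Real.exp (-(((k + 1 + i : ℕ) : ℝ) * (((k + 1 + i : ℕ) : ℝ) + 1)) * t)) := by
    exact summable_of_sum_range_le (fun i => by positivity) hbound
  exact ⟨hsummable, Summable.tsum_le_of_sum_range_le hsummable hbound⟩
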